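/- Every dihedral Artin group A_{I_n} (two generators, edge label n ≥ 2) is normally poly-free. -/

import Mathlib

universe u v

/-- Poly-free with a subnormal chain of length `n` (length at most `n`,
since successive subgroups may coincide): there is a chain
`1 = G₀ ⊴ G₁ ⊴ ⋯ ⊴ Gₙ = G` with each quotient `Gᵢ₊₁/Gᵢ` a free group. -/
def IsPolyFreeOfLen : ℕ → (G : Type u) → [Group G] → Prop
  | 0, G, _ => Subsingleton G
  | n + 1, G, _ => ∃ (N : Subgroup G) (_ : N.Normal),
      IsPolyFreeOfLen n N ∧ IsFreeGroup (G ⧸ N)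

/-- A group is poly-free if it admits a subnormal chain with free quotients. -/
def IsPolyFree (G : Type u) [Group G] : Prop := ∃ n, IsPolyFreeOfLen n G

/-- Normally poly-free with a chain of length `n`: a chain
`1 = G₀ ≤ G₁ ≤ ⋯ ≤ Gₙ = G` with every `Gᵢ` normal in `G` and every quotient
`Gᵢ₊₁/Gᵢ` a free group (expressed via a surjection onto a free group whose
kernel is the previous term). -/
def IsNormallyPolyFreeOfLen (n : ℕ) (G : Type u) [Group G] : Prop :=
  ∃ c : Fin (n + 1) → Subgroup G,
    c 0 = ⊥ ∧ c (Fin.last n) = ⊤ ∧ (∀ i : Fin n, c i.castSucc ≤ c i.succ) ∧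
    (∀ i, (c i).Normal) ∧
    ∀ i : Fin n, ∃ (F : Type u) (_ : Group F) (f : ↥(c i.succ) →* F),
      IsFreeGroup F ∧ Function.Surjective f ∧
      f.ker = (c i.castSucc).subgroupOf (c i.succ)

/-- A group is normally poly-free if it admits such a chain of some length. -/
def IsNormallyPolyFree (G : Type u) [Group G] : Prop :=
  ∃ n, IsNormallyPolyFreeOfLen n G


/-- The alternating product `x * y * x * ⋯` of length `n`. -/
def altProd {M : Type*} [Monoid M] (x y : M) : ℕ → M
  | 0 => 1
  | n + 1 => x * altProd y x n

/-- The dihedral Artin group with label `n`: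
`⟨x, y ∣ ⟨x,y⟩ⁿ = ⟨y,x⟩ⁿ⟩` where `⟨x,y⟩ⁿ` is the alternating product of length `n`,
with `x = FreeGroup.of true`, `y = FreeGroup.of false`. -/
abbrev DihedralArtin (n : ℕ) : Type :=
  PresentedGroup
    ({altProd (FreeGroup.of true) (FreeGroup.of false) n *
        (altProd (FreeGroup.of false) (FreeGroup.of true) n)⁻¹} : Set (FreeGroup Bool))


namespace DAproof

/-- free group on `n-1` generators -/
abbrev F (n : ℕ) := FreeGroup (Fin (n - 1))

/-- the `i`-th generator (or `1` out of range) -/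
def B (n : ℕ) (i : ℕ) : F n := if h : i < n - 1 then FreeGroup.of ⟨i, h⟩ else 1

/-- product of even-indexed generators `g 0 * g 2 * ⋯ * g (2k-2)` -/
def Ev (n : ℕ) : ℕ → F n
  | 0 => 1
  | k + 1 => Ev n k * B n (2 * k)

/-- product of odd-indexed generators `g 1 * g 3 * ⋯ * g (2k-1)` -/
def Od (n : ℕ) : ℕ → F n
  | 0 => 1
  | k + 1 => Od n k * B n (2 * k + 1)

/-- image of the top generator under the monodromy -/
def W (n : ℕ) : F n :=
  if n % 2 = 0 then (Od n (n / 2 - 1))⁻¹ * Ev n (n / 2)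
  else (Ev n (n / 2))⁻¹ * Od n (n / 2)

/-- image of the bottom generator under the inverse monodromy -/
def W' (n : ℕ) : F n :=
  if n % 2 = 0 then Ev n (n / 2) * (Od n (n / 2 - 1))⁻¹
  else Ev n (n / 2) * (Od n (n / 2))⁻¹

/-- the monodromy endomorphism -/
def σ (n : ℕ) : F n →* F n :=
  FreeGroup.lift (fun j : Fin (n - 1) => if (j : ℕ) = n - 2 then W n else B n ((j : ℕ) + 1))

/-- the inverse monodromy endomorphism -/
def σ' (n : ℕ) : F n →* F n :=
  FreeGroup.lift (fun j : Fin (n - 1) => if (j : ℕ) = 0 then W' n else B n ((j : ℕ) - 1))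

theorem B_of {n i : ℕ} (h : i < n - 1) : B n i = FreeGroup.of (⟨i, h⟩ : Fin (n - 1)) := dif_pos h

theorem σ_B_mid {n i : ℕ} (h : i + 1 < n - 1) : σ n (B n i) = B n (i + 1) := by
  have hi : i < n - 1 := Nat.lt_of_succ_lt h
  rw [B_of hi, σ, FreeGroup.lift_apply_of]
  have : i ≠ n - 2 := by omega
  simp [this]

theorem σ_B_top {n : ℕ} (hn : 2 ≤ n) : σ n (B n (n - 2)) = W n := by
  have hi : n - 2 < n - 1 := by omega
  rw [B_of hi, σ, FreeGroup.lift_apply_of]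
  simp

theorem σ'_B_succ {n i : ℕ} (h : i + 1 < n - 1) : σ' n (B n (i + 1)) = B n i := by
  rw [B_of h, σ', FreeGroup.lift_apply_of]
  simp

theorem σ'_B_zero {n : ℕ} (hn : 2 ≤ n) : σ' n (B n 0) = W' n := by
  have hi : 0 < n - 1 := by omega
  rw [B_of hi, σ', FreeGroup.lift_apply_of]
  simp

theorem σ_Ev {n k : ℕ} (h : 2 * k ≤ n - 1) : σ n (Ev n k) = Od n k := by
  induction k with
  | zero => simp [Ev, Od]
  | succ k ih =>
    rw [Ev, map_mul, ih (by omega), σ_B_mid (by omega), Od]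

theorem σ_Od {n k : ℕ} (h : 2 * k < n - 1) : B n 0 * σ n (Od n k) = Ev n (k + 1) := by
  induction k with
  | zero => simp [Ev, Od]
  | succ k ih =>
    rw [Od, map_mul, ← mul_assoc, ih (by omega), σ_B_mid (by omega)]
    rfl

theorem σ_Ev_top {n k : ℕ} (h : n - 1 = 2 * k + 1) (hn : 2 ≤ n) :
    σ n (Ev n (k + 1)) = Od n k * W n := by
  rw [Ev, map_mul, σ_Ev (by omega)]
  have : 2 * k = n - 2 := by omega
  rw [this, σ_B_top hn]

theorem σ_Od_top {n k : ℕ} (h : n - 1 = 2 * k + 2) (hn : 2 ≤ n) :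
    B n 0 * σ n (Od n (k + 1)) = Ev n (k + 1) * W n := by
  rw [Od, map_mul, ← mul_assoc, σ_Od (by omega)]
  have : 2 * k + 1 = n - 2 := by omega
  rw [this, σ_B_top hn]

theorem σ'_Od {n k : ℕ} (h : 2 * k ≤ n - 1) : σ' n (Od n k) = Ev n k := by
  induction k with
  | zero => simp [Ev, Od]
  | succ k ih =>
    rw [Od, map_mul, ih (by omega), σ'_B_succ (show 2 * k + 1 < n - 1 by omega), Ev]

theorem σ'_Ev {n k : ℕ} (h : 2 * k < n - 1) (hn : 2 ≤ n) :
    σ' n (Ev n (k + 1)) = W' n * Od n k := by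
  induction k with
  | zero => simp [Ev, Od, σ'_B_zero hn]
  | succ k ih =>
    rw [Ev, map_mul, ih (by omega), mul_assoc]
    have : 2 * (k + 1) = (2 * k + 1) + 1 := by ring
    rw [this, σ'_B_succ (by omega)]
    rfl


theorem Ev_succ (n k : ℕ) : Ev n (k + 1) = Ev n k * B n (2 * k) := rfl
theorem Od_succ (n k : ℕ) : Od n (k + 1) = Od n k * B n (2 * k + 1) := rfl

theorem σ_W' {n : ℕ} (hn : 2 ≤ n) : σ n (W' n) = B n 0 := by
  rcases Nat.even_or_odd n with he | ho
  · -- n = 2c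
    obtain ⟨c, rfl⟩ : ∃ c, n = 2 * c := he.exists_two_nsmul n
    have hc : 1 ≤ c := by omega
    have h2 : (2 * c) % 2 = 0 := by omega
    have hdiv : (2 * c) / 2 = c := by omega
    have hEv : σ (2 * c) (Ev (2 * c) c) = Od (2 * c) (c - 1) * W (2 * c) := by
      have := σ_Ev_top (n := 2 * c) (k := c - 1) (by omega) hn
      rwa [show c - 1 + 1 = c by omega] at this
    have hOd : B (2 * c) 0 * σ (2 * c) (Od (2 * c) (c - 1)) = Ev (2 * c) c := by
      have := σ_Od (n := 2 * c) (k := c - 1) (by omega)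
      rwa [show c - 1 + 1 = c by omega] at this
    have hW : W (2 * c) = (Od (2 * c) (c - 1))⁻¹ * Ev (2 * c) c := by
      rw [W, if_pos h2, hdiv]
    rw [W', if_pos h2, hdiv, map_mul, map_inv, hEv, hW]
    have : σ (2 * c) (Od (2 * c) (c - 1)) = (B (2 * c) 0)⁻¹ * Ev (2 * c) c := by
      rw [← hOd]; group
    rw [this]
    group
  · obtain ⟨c, rfl⟩ : ∃ c, n = 2 * c + 1 := ho
    have hc : 1 ≤ c := by omega
    have h2 : ¬ (2 * c + 1) % 2 = 0 := by omega
    have hdiv : (2 * c + 1) / 2 = c := by omega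
    have hEv : σ (2 * c + 1) (Ev (2 * c + 1) c) = Od (2 * c + 1) c := σ_Ev (by omega)
    have hOd : B (2 * c + 1) 0 * σ (2 * c + 1) (Od (2 * c + 1) c) =
        Ev (2 * c + 1) c * W (2 * c + 1) := by
      have := σ_Od_top (n := 2 * c + 1) (k := c - 1) (by omega) hn
      rwa [show c - 1 + 1 = c by omega] at this
    have hW : W (2 * c + 1) = (Ev (2 * c + 1) c)⁻¹ * Od (2 * c + 1) c := by
      rw [W, if_neg h2, hdiv]
    rw [W', if_neg h2, hdiv, map_mul, map_inv, hEv]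
    have : σ (2 * c + 1) (Od (2 * c + 1) c) =
        (B (2 * c + 1) 0)⁻¹ * (Ev (2 * c + 1) c * W (2 * c + 1)) := by
      rw [← hOd]; group
    rw [this, hW]
    group

theorem σ'_W {n : ℕ} (hn : 2 ≤ n) : σ' n (W n) = B n (n - 2) := by
  rcases Nat.even_or_odd n with he | ho
  · obtain ⟨c, rfl⟩ : ∃ c, n = 2 * c := he.exists_two_nsmul n
    have hc : 1 ≤ c := by omega
    have h2 : (2 * c) % 2 = 0 := by omega
    have hdiv : (2 * c) / 2 = c := by omega
    have hOd : σ' (2 * c) (Od (2 * c) (c - 1)) = Ev (2 * c) (c - 1) := σ'_Od (by omega)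
    have hEv : σ' (2 * c) (Ev (2 * c) c) = W' (2 * c) * Od (2 * c) (c - 1) := by
      have := σ'_Ev (n := 2 * c) (k := c - 1) (by omega) hn
      rwa [show c - 1 + 1 = c by omega] at this
    have hW' : W' (2 * c) = Ev (2 * c) c * (Od (2 * c) (c - 1))⁻¹ := by
      rw [W', if_pos h2, hdiv]
    have hEvs : Ev (2 * c) c = Ev (2 * c) (c - 1) * B (2 * c) (2 * (c - 1)) := by
      obtain ⟨d, rfl⟩ : ∃ d, c = d + 1 := ⟨c - 1, by omega⟩
      simp only [Nat.add_sub_cancel]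
      rfl
    rw [W, if_pos h2, hdiv, map_mul, map_inv, hOd, hEv, hW']
    rw [show 2 * c - 2 = 2 * (c - 1) by omega, hEvs]
    group
  · obtain ⟨c, rfl⟩ : ∃ c, n = 2 * c + 1 := ho
    have hc : 1 ≤ c := by omega
    have h2 : ¬ (2 * c + 1) % 2 = 0 := by omega
    have hdiv : (2 * c + 1) / 2 = c := by omega
    have hOd : σ' (2 * c + 1) (Od (2 * c + 1) c) = Ev (2 * c + 1) c := σ'_Od (by omega)
    have hEv : σ' (2 * c + 1) (Ev (2 * c + 1) c) = W' (2 * c + 1) * Od (2 * c + 1) (c - 1) := by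
      have := σ'_Ev (n := 2 * c + 1) (k := c - 1) (by omega) hn
      rwa [show c - 1 + 1 = c by omega] at this
    have hW' : W' (2 * c + 1) = Ev (2 * c + 1) c * (Od (2 * c + 1) c)⁻¹ := by
      rw [W', if_neg h2, hdiv]
    have hOds : Od (2 * c + 1) c = Od (2 * c + 1) (c - 1) * B (2 * c + 1) (2 * (c - 1) + 1) := by
      obtain ⟨d, rfl⟩ : ∃ d, c = d + 1 := ⟨c - 1, by omega⟩
      simp only [Nat.add_sub_cancel]
      rfl
    rw [W, if_neg h2, hdiv, map_mul, map_inv, hOd, hEv, hW']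
    rw [show 2 * c + 1 - 2 = 2 * (c - 1) + 1 by omega, hOds]
    group

theorem σ'_comp_σ {n : ℕ} (hn : 2 ≤ n) : (σ' n).comp (σ n) = MonoidHom.id (F n) := by
  apply FreeGroup.ext_hom
  intro j
  simp only [MonoidHom.comp_apply, MonoidHom.id_apply]
  by_cases hj : (j : ℕ) = n - 2
  · have : FreeGroup.of j = B n (n - 2) := by
      rw [B_of (show n - 2 < n - 1 by omega)]
      exact congrArg _ (Fin.ext hj)
    rw [this, σ_B_top hn, σ'_W hn]
  · have hjlt : (j : ℕ) + 1 < n - 1 := by have := j.isLt; omega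
    have : FreeGroup.of j = B n (j : ℕ) := by
      rw [B_of (show (j : ℕ) < n - 1 by omega)]
    rw [this, σ_B_mid hjlt, σ'_B_succ hjlt]

theorem σ_comp_σ' {n : ℕ} (hn : 2 ≤ n) : (σ n).comp (σ' n) = MonoidHom.id (F n) := by
  apply FreeGroup.ext_hom
  intro j
  simp only [MonoidHom.comp_apply, MonoidHom.id_apply]
  by_cases hj : (j : ℕ) = 0
  · have : FreeGroup.of j = B n 0 := by
      rw [B_of (show 0 < n - 1 by omega)]
      exact congrArg _ (Fin.ext hj)
    rw [this, σ'_B_zero hn, σ_W' hn]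
  · obtain ⟨i, hi⟩ : ∃ i, (j : ℕ) = i + 1 := ⟨(j : ℕ) - 1, by omega⟩
    have hjlt : i + 1 < n - 1 := by have := j.isLt; omega
    have : FreeGroup.of j = B n (i + 1) := by
      rw [B_of hjlt]
      exact congrArg _ (Fin.ext hi)
    rw [this, σ'_B_succ hjlt, σ_B_mid hjlt]

/-- the monodromy as an automorphism -/
def ψ {n : ℕ} (hn : 2 ≤ n) : F n ≃* F n :=
  MonoidHom.toMulEquiv (σ n) (σ' n) (σ'_comp_σ hn) (σ_comp_σ' hn)

@[simp] theorem ψ_apply {n : ℕ} (hn : 2 ≤ n) (g : F n) : ψ hn g = σ n g := rfl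
@[simp] theorem ψ_symm_apply {n : ℕ} (hn : 2 ≤ n) (g : F n) : (ψ hn).symm g = σ' n g := rfl


theorem map_altProd {M N : Type*} [Monoid M] [Monoid N] (f : M →* N) (x y : M) :
    ∀ k, f (altProd x y k) = altProd (f x) (f y) k := by
  intro k
  induction k generalizing x y with
  | zero => simp [altProd]
  | succ k ih => simp [altProd, ih]

/-- The ℤ-action on `F n` by the monodromy. -/
def φψ {n : ℕ} (hn : 2 ≤ n) : Multiplicative ℤ →* MulAut (F n) :=
  zpowersHom (MulAut (F n)) (ψ hn)

/-- The semidirect product `F_{n-1} ⋊ ℤ`. -/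
abbrev H {n : ℕ} (hn : 2 ≤ n) := SemidirectProduct (F n) (Multiplicative ℤ) (φψ hn)

/-- the generator of the ℤ factor -/
def z : Multiplicative ℤ := Multiplicative.ofAdd 1

open SemidirectProduct

theorem φψ_z_apply {n : ℕ} (hn : 2 ≤ n) (a : F n) : φψ hn z a = σ n a := by
  simp only [φψ, z, zpowersHom_apply, toAdd_ofAdd, zpow_one]
  rfl

theorem inr_mul_inl {n : ℕ} (hn : 2 ≤ n) (g : Multiplicative ℤ) (a : F n) :
    (inr g : H hn) * inl a = inl (φψ hn g a) * inr g := by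
  rw [inl_aut (φ := φψ hn) g a, mul_assoc, mul_assoc]
  simp [← map_mul]

/-- generators of `H` corresponding to `x`, `y` -/
def XH {n : ℕ} (hn : 2 ≤ n) : H hn := inr z
def YH {n : ℕ} (hn : 2 ≤ n) : H hn := inl (B n 0) * inr z

/-- the pair `(u_k, v_k)` of alternating-product components -/
def uv (n : ℕ) : ℕ → F n × F n
  | 0 => (1, 1)
  | k + 1 => (σ n (uv n k).2, B n 0 * σ n (uv n k).1)

theorem altProd_H {n : ℕ} (hn : 2 ≤ n) (k : ℕ) :
    altProd (XH hn) (YH hn) k = inl (uv n k).1 * inr (z ^ k) ∧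
    altProd (YH hn) (XH hn) k = inl (uv n k).2 * inr (z ^ k) := by
  induction k with
  | zero => simp [altProd, uv]
  | succ k ih =>
    obtain ⟨ih1, ih2⟩ := ih
    constructor
    · show XH hn * altProd (YH hn) (XH hn) k = _
      rw [ih2, XH, ← mul_assoc, inr_mul_inl hn, φψ_z_apply hn, mul_assoc, ← map_mul, ← pow_succ']
      rfl
    · show YH hn * altProd (XH hn) (YH hn) k = _
      rw [ih1, YH, mul_assoc, ← mul_assoc (inr z), inr_mul_inl hn, φψ_z_apply hn,
        show (uv n (k + 1)).2 = B n 0 * σ n (uv n k).1 from rfl, map_mul, pow_succ',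
        map_mul]
      simp [mul_assoc]

theorem uv_closed {n : ℕ} (hn : 2 ≤ n) :
    ∀ k, k ≤ n - 1 → (uv n k).1 = Od n (k / 2) ∧ (uv n k).2 = Ev n ((k + 1) / 2) := by
  intro k
  induction k with
  | zero => intro _; simp [uv, Od, Ev]
  | succ k ih =>
    intro hk
    obtain ⟨ih1, ih2⟩ := ih (by omega)
    constructor
    · show σ n (uv n k).2 = _
      rw [ih2, σ_Ev (by omega)]
    · show B n 0 * σ n (uv n k).1 = _
      rw [ih1, σ_Od (by omega)]
      congr 1
      omega

theorem uv_rel {n : ℕ} (hn : 2 ≤ n) : (uv n n).1 = (uv n n).2 := by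
  obtain ⟨k, hk⟩ : ∃ k, n = k + 1 := ⟨n - 1, by omega⟩
  obtain ⟨h1, h2⟩ := uv_closed hn k (by omega)
  rcases Nat.even_or_odd n with he | ho
  · obtain ⟨c, hc⟩ : ∃ c, n = 2 * c := he.exists_two_nsmul n
    have hc1 : 1 ≤ c := by omega
    have hW : W n = (Od n (c - 1))⁻¹ * Ev n c := by
      rw [W, if_pos (by omega), show n / 2 = c by omega]
    have heq : uv n n = uv n (k + 1) := by rw [← hk]
    rw [heq]
    show σ n (uv n k).2 = B n 0 * σ n (uv n k).1
    rw [h1, h2, show (k + 1) / 2 = c by omega, show k / 2 = c - 1 by omega]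
    have hL : σ n (Ev n c) = Od n (c - 1) * W n := by
      have := σ_Ev_top (n := n) (k := c - 1) (by omega) hn
      rwa [show c - 1 + 1 = c by omega] at this
    have hR : B n 0 * σ n (Od n (c - 1)) = Ev n c := by
      have := σ_Od (n := n) (k := c - 1) (by omega)
      rwa [show c - 1 + 1 = c by omega] at this
    rw [hL, hR, hW]
    group
  · obtain ⟨c, hc⟩ := ho
    have hc1 : 1 ≤ c := by omega
    have hW : W n = (Ev n c)⁻¹ * Od n c := by
      rw [W, if_neg (by omega), show n / 2 = c by omega]
    have heq : uv n n = uv n (k + 1) := by rw [← hk]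
    rw [heq]
    show σ n (uv n k).2 = B n 0 * σ n (uv n k).1
    rw [h1, h2, show (k + 1) / 2 = c by omega, show k / 2 = c by omega]
    have hL : σ n (Ev n c) = Od n c := σ_Ev (by omega)
    have hR : B n 0 * σ n (Od n c) = Ev n c * W n := by
      have := σ_Od_top (n := n) (k := c - 1) (by omega) hn
      rwa [show c - 1 + 1 = c by omega] at this
    rw [hL, hR, hW]
    group


/-! ### the group `G` and maps both ways -/

/-- generator `x` -/
def xg (n : ℕ) : DihedralArtin n := PresentedGroup.of true
/-- generator `y` -/
def yg (n : ℕ) : DihedralArtin n := PresentedGroup.of false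

/-- the kernel generators in `G` -/
def A (n : ℕ) (i : ℕ) : DihedralArtin n := xg n ^ i * yg n * (xg n ^ (i + 1))⁻¹

theorem conj_A (n : ℕ) (i : ℕ) : xg n * A n i * (xg n)⁻¹ = A n (i + 1) := by
  simp only [A, pow_succ]
  group

/-- image of `Ev` in `G` -/
def EvG (n : ℕ) : ℕ → DihedralArtin n
  | 0 => 1
  | k + 1 => EvG n k * A n (2 * k)

/-- image of `Od` in `G` -/
def OdG (n : ℕ) : ℕ → DihedralArtin n
  | 0 => 1
  | k + 1 => OdG n k * A n (2 * k + 1)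

theorem conj_EvG (n : ℕ) (k : ℕ) : xg n * EvG n k * (xg n)⁻¹ = OdG n k := by
  induction k with
  | zero => simp [EvG, OdG]
  | succ k ih =>
    show xg n * (EvG n k * A n (2 * k)) * (xg n)⁻¹ = OdG n k * A n (2 * k + 1)
    rw [← ih, ← conj_A n (2 * k)]
    group

theorem conj_OdG (n : ℕ) (k : ℕ) : A n 0 * (xg n * OdG n k * (xg n)⁻¹) = EvG n (k + 1) := by
  induction k with
  | zero => show A n 0 * (xg n * 1 * (xg n)⁻¹) = 1 * A n 0; group
  | succ k ih =>
    show A n 0 * (xg n * (OdG n k * A n (2 * k + 1)) * (xg n)⁻¹) = EvG n (k + 1) * A n (2 * (k + 1))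
    rw [← ih, show 2 * (k + 1) = (2 * k + 1) + 1 by ring, ← conj_A n (2 * k + 1)]
    group

theorem altProd_G (n : ℕ) (k : ℕ) :
    altProd (xg n) (yg n) k = OdG n (k / 2) * xg n ^ k ∧
    altProd (yg n) (xg n) k = EvG n ((k + 1) / 2) * xg n ^ k := by
  induction k with
  | zero => simp [altProd, OdG, EvG]
  | succ k ih =>
    obtain ⟨ih1, ih2⟩ := ih
    constructor
    · show xg n * altProd (yg n) (xg n) k = _
      rw [ih2, show (k + 1) / 2 = (k + 1) / 2 from rfl]
      have : xg n * (EvG n ((k + 1) / 2) * xg n ^ k) = (xg n * EvG n ((k + 1) / 2) * (xg n)⁻¹) * xg n ^ (k + 1) := by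
        rw [pow_succ']
        group
      rw [this, conj_EvG]
    · show yg n * altProd (xg n) (yg n) k = _
      rw [ih1]
      have hy : yg n = A n 0 * xg n := by simp [A]
      have : yg n * (OdG n (k / 2) * xg n ^ k) =
          (A n 0 * (xg n * OdG n (k / 2) * (xg n)⁻¹)) * xg n ^ (k + 1) := by
        rw [hy, pow_succ']
        group
      rw [this, conj_OdG]
      congr 2
      omega

theorem rel_G (n : ℕ) : altProd (xg n) (yg n) n = altProd (yg n) (xg n) n := by
  have hmem : (altProd (FreeGroup.of true) (FreeGroup.of false) n *
      (altProd (FreeGroup.of false) (FreeGroup.of true) n)⁻¹ : FreeGroup Bool) ∈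
      Subgroup.normalClosure ({altProd (FreeGroup.of true) (FreeGroup.of false) n *
        (altProd (FreeGroup.of false) (FreeGroup.of true) n)⁻¹} : Set (FreeGroup Bool)) :=
    Subgroup.subset_normalClosure rfl
  have h1 : (PresentedGroup.mk _ (altProd (FreeGroup.of true) (FreeGroup.of false) n *
      (altProd (FreeGroup.of false) (FreeGroup.of true) n)⁻¹) : DihedralArtin n) = 1 :=
    (QuotientGroup.eq_one_iff _).mpr hmem
  rw [map_mul, map_inv] at h1
  have h2 := mul_eq_one_iff_eq_inv.mp h1
  rw [inv_inv] at h2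
  have e1 : (PresentedGroup.mk _ (altProd (FreeGroup.of true) (FreeGroup.of false) n) :
      DihedralArtin n) = altProd (xg n) (yg n) n := by
    rw [map_altProd]; rfl
  have e2 : (PresentedGroup.mk _ (altProd (FreeGroup.of false) (FreeGroup.of true) n) :
      DihedralArtin n) = altProd (yg n) (xg n) n := by
    rw [map_altProd]; rfl
  rw [e1, e2] at h2
  exact h2

theorem rel_G' (n : ℕ) : OdG n (n / 2) = EvG n ((n + 1) / 2) := by
  have h := rel_G n
  rw [(altProd_G n n).1, (altProd_G n n).2] at h
  exact mul_right_cancel h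

/-- the map `F n →* G` -/
def f₁ (n : ℕ) : F n →* DihedralArtin n := FreeGroup.lift (fun j : Fin (n - 1) => A n (j : ℕ))

theorem f₁_B {n i : ℕ} (h : i < n - 1) : f₁ n (B n i) = A n i := by
  rw [B_of h, f₁, FreeGroup.lift_apply_of]

theorem f₁_Ev {n k : ℕ} (h : 2 * k ≤ n) (hn : 2 ≤ n) : f₁ n (Ev n k) = EvG n k := by
  induction k with
  | zero => simp [Ev, EvG]
  | succ k ih =>
    rw [Ev, map_mul, ih (by omega), f₁_B (by omega), EvG]

theorem f₁_Od {n k : ℕ} (h : 2 * k < n) (hn : 2 ≤ n) : f₁ n (Od n k) = OdG n k := by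
  induction k with
  | zero => simp [Od, OdG]
  | succ k ih =>
    rw [Od, map_mul, ih (by omega), f₁_B (by omega), OdG]

theorem f₁_W {n : ℕ} (hn : 2 ≤ n) : f₁ n (W n) = A n (n - 1) := by
  rcases Nat.even_or_odd n with he | ho
  · obtain ⟨c, hc⟩ : ∃ c, n = 2 * c := he.exists_two_nsmul n
    have hc1 : 1 ≤ c := by omega
    have hrel : OdG n c = EvG n c := by
      have := rel_G' n
      rwa [show n / 2 = c by omega, show (n + 1) / 2 = c by omega] at this
    have hOds : OdG n c = OdG n (c - 1) * A n (n - 1) := by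
      obtain ⟨d, rfl⟩ : ∃ d, c = d + 1 := ⟨c - 1, by omega⟩
      simp only [Nat.add_sub_cancel]
      rw [show n - 1 = 2 * d + 1 by omega]
      rfl
    rw [W, if_pos (by omega), show n / 2 = c by omega, map_mul, map_inv,
      f₁_Od (by omega) hn, f₁_Ev (by omega) hn, ← hrel, hOds]
    group
  · obtain ⟨c, hc⟩ := ho
    have hc1 : 1 ≤ c := by omega
    have hrel : OdG n c = EvG n c * A n (n - 1) := by
      have := rel_G' n
      rw [show n / 2 = c by omega, show (n + 1) / 2 = c + 1 by omega] at this
      rw [this, show n - 1 = 2 * c by omega]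
      rfl
    rw [W, if_neg (by omega), show n / 2 = c by omega, map_mul, map_inv,
      f₁_Od (by omega) hn, f₁_Ev (by omega) hn, hrel]
    group

theorem intertwine {n : ℕ} (hn : 2 ≤ n) (g : F n) :
    f₁ n (σ n g) = xg n * f₁ n g * (xg n)⁻¹ := by
  have : (f₁ n).comp (σ n) =
      ((MulAut.conj (xg n)).toMonoidHom : DihedralArtin n →* DihedralArtin n).comp (f₁ n) := by
    apply FreeGroup.ext_hom
    intro j
    simp only [MonoidHom.comp_apply, MulEquiv.coe_toMonoidHom, MulAut.conj_apply]
    by_cases hj : (j : ℕ) = n - 2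
    · have hof : FreeGroup.of j = B n (n - 2) := by
        rw [B_of (show n - 2 < n - 1 by omega)]
        exact congrArg _ (Fin.ext hj)
      rw [hof, σ_B_top hn, f₁_W hn, f₁_B (by omega), show n - 1 = (n - 2) + 1 by omega,
        ← conj_A]
    · have hjlt : (j : ℕ) + 1 < n - 1 := by have := j.isLt; omega
      have hof : FreeGroup.of j = B n (j : ℕ) := by rw [B_of (show (j : ℕ) < n - 1 by omega)]
      rw [hof, σ_B_mid hjlt, f₁_B (by omega), f₁_B (by omega), ← conj_A]
  have := DFunLike.congr_fun this g
  simpa using this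

theorem intertwine' {n : ℕ} (hn : 2 ≤ n) (g : F n) :
    f₁ n (σ' n g) = (xg n)⁻¹ * f₁ n g * xg n := by
  have h := intertwine hn (σ' n g)
  have hσ : σ n (σ' n g) = g := DFunLike.congr_fun (σ_comp_σ' hn) g
  rw [hσ] at h
  rw [h]
  group

/-- the ℤ-part of the map `H →* G` -/
def f₂ (n : ℕ) : Multiplicative ℤ →* DihedralArtin n := zpowersHom _ (xg n)

theorem hcomp {n : ℕ} (hn : 2 ≤ n) : ∀ g : Multiplicative ℤ,
    (f₁ n).comp ((φψ hn g) : F n ≃* F n).toMonoidHom =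
      (MulAut.conj (f₂ n g)).toMonoidHom.comp (f₁ n) := by
  have key : ∀ k : ℤ, ∀ a : F n, f₁ n ((ψ hn ^ k) a) = xg n ^ k * f₁ n a * (xg n ^ k)⁻¹ := by
    intro k
    induction k using Int.induction_on with
    | zero => intro a; simp
    | succ k ih =>
      intro a
      have : (ψ hn ^ ((k : ℤ) + 1)) a = (ψ hn ^ (k : ℤ)) (ψ hn a) := by
        rw [zpow_add_one]
        rfl
      rw [this, ih, show (ψ hn a : F n) = σ n a from rfl, intertwine hn]
      rw [zpow_add_one]
      group
    | pred k ih =>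
      intro a
      have : (ψ hn ^ (-(k : ℤ) - 1)) a = (ψ hn ^ (-(k : ℤ))) ((ψ hn)⁻¹ a) := by
        rw [zpow_sub_one]
        rfl
      rw [this, ih, show (((ψ hn)⁻¹ : MulAut (F n)) a : F n) = σ' n a from rfl, intertwine' hn]
      rw [zpow_sub_one]
      group
  intro g
  refine MonoidHom.ext fun a => ?_
  simp only [MonoidHom.comp_apply, MulEquiv.coe_toMonoidHom, MulAut.conj_apply]
  have h1 : (φψ hn g) a = (ψ hn ^ g.toAdd) a := rfl
  have h2 : f₂ n g = xg n ^ g.toAdd := rfl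
  rw [h1, h2, key]

/-- the map `H →* G` -/
def Φ {n : ℕ} (hn : 2 ≤ n) : H hn →* DihedralArtin n :=
  SemidirectProduct.lift (f₁ n) (f₂ n) (hcomp hn)

/-- the map `G →* H` -/
def Θ {n : ℕ} (hn : 2 ≤ n) : DihedralArtin n →* H hn :=
  PresentedGroup.toGroup (f := fun b : Bool => cond b (XH hn) (YH hn)) (by
    intro r hr
    rw [Set.mem_singleton_iff] at hr
    subst hr
    rw [map_mul, map_inv, map_altProd, map_altProd, FreeGroup.lift_apply_of, FreeGroup.lift_apply_of]
    show altProd (XH hn) (YH hn) n * (altProd (YH hn) (XH hn) n)⁻¹ = 1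
    rw [(altProd_H hn n).1, (altProd_H hn n).2, uv_rel hn]
    group)


theorem Θ_x {n : ℕ} (hn : 2 ≤ n) : Θ hn (xg n) = XH hn := PresentedGroup.toGroup.of _
theorem Θ_y {n : ℕ} (hn : 2 ≤ n) : Θ hn (yg n) = YH hn := PresentedGroup.toGroup.of _

theorem Φ_comp_Θ {n : ℕ} (hn : 2 ≤ n) :
    (Φ hn).comp (Θ hn) = MonoidHom.id (DihedralArtin n) := by
  apply PresentedGroup.ext
  intro b
  cases b
  · show Φ hn (Θ hn (yg n)) = yg n
    rw [Θ_y hn, YH, map_mul]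
    have h1 : Φ hn (SemidirectProduct.inl (B n 0)) = A n 0 := by
      rw [Φ, SemidirectProduct.lift_inl, f₁_B (by omega)]
    have h2 : Φ hn (SemidirectProduct.inr z) = xg n := by
      rw [Φ, SemidirectProduct.lift_inr]
      show xg n ^ ((Multiplicative.ofAdd (1 : ℤ)).toAdd) = xg n
      simp
    rw [h1, h2, A]
    group
  · show Φ hn (Θ hn (xg n)) = xg n
    rw [Θ_x hn, XH, Φ, SemidirectProduct.lift_inr]
    show xg n ^ ((Multiplicative.ofAdd (1 : ℤ)).toAdd) = xg n
    simp

theorem Θ_A {n : ℕ} (hn : 2 ≤ n) : ∀ i, i < n - 1 →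
    Θ hn (A n i) = SemidirectProduct.inl (B n i) := by
  intro i
  induction i with
  | zero =>
    intro _
    show Θ hn (xg n ^ 0 * yg n * (xg n ^ 1)⁻¹) = _
    rw [map_mul, map_inv, map_mul, map_pow, map_pow, Θ_x hn, Θ_y hn, pow_zero, pow_one,
      one_mul, YH, XH, mul_assoc]
    simp
  | succ i ih =>
    intro hi
    rw [← conj_A, map_mul, map_mul, map_inv, Θ_x hn, ih (by omega), XH]
    rw [← σ_B_mid (show i + 1 < n - 1 from hi), ← φψ_z_apply hn]
    rw [← map_inv]
    exact (SemidirectProduct.inl_aut z (B n i)).symm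

theorem Θ_comp_Φ {n : ℕ} (hn : 2 ≤ n) :
    (Θ hn).comp (Φ hn) = MonoidHom.id (H hn) := by
  apply SemidirectProduct.hom_ext
  · apply FreeGroup.ext_hom
    intro j
    simp only [MonoidHom.comp_apply, MonoidHom.id_apply]
    have h1 : Φ hn (SemidirectProduct.inl (FreeGroup.of j)) = A n (j : ℕ) := by
      rw [Φ, SemidirectProduct.lift_inl, f₁, FreeGroup.lift_apply_of]
    rw [h1, Θ_A hn (j : ℕ) j.isLt]
    congr 1
    rw [B_of j.isLt]
  · apply MonoidHom.ext_mint
    simp only [MonoidHom.comp_apply, MonoidHom.id_apply]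
    have h2 : Φ hn (SemidirectProduct.inr (Multiplicative.ofAdd 1)) = xg n := by
      rw [Φ, SemidirectProduct.lift_inr]
      show xg n ^ ((Multiplicative.ofAdd (1 : ℤ)).toAdd) = xg n
      simp
    rw [h2, Θ_x hn]
    rfl

/-- the isomorphism `G ≃* H` -/
def e {n : ℕ} (hn : 2 ≤ n) : DihedralArtin n ≃* H hn :=
  MonoidHom.toMulEquiv (Θ hn) (Φ hn) (Φ_comp_Θ hn) (Θ_comp_Φ hn)

/-- the projection to ℤ -/
def ξ {n : ℕ} (hn : 2 ≤ n) : DihedralArtin n →* Multiplicative ℤ :=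
  SemidirectProduct.rightHom.comp (Θ hn)

/-- the free kernel -/
def K {n : ℕ} (hn : 2 ≤ n) : Subgroup (DihedralArtin n) := (ξ hn).ker

theorem K_eq_comap {n : ℕ} (hn : 2 ≤ n) :
    K hn = Subgroup.comap ((e hn) : DihedralArtin n →* H hn)
      (SemidirectProduct.rightHom : H hn →* Multiplicative ℤ).ker := by
  rw [K, ξ, ← MonoidHom.comap_ker]
  rfl

instance K_free {n : ℕ} (hn : 2 ≤ n) : IsFreeGroup (K hn) := by
  have b0 := FreeGroupBasis.ofFreeGroup (Fin (n - 1))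
  have iso1 : F n ≃* (SemidirectProduct.inl : F n →* H hn).range :=
    MonoidHom.ofInjective SemidirectProduct.inl_injective
  have iso2 : ((SemidirectProduct.inl : F n →* H hn).range : Subgroup (H hn)) ≃*
      (SemidirectProduct.rightHom : H hn →* Multiplicative ℤ).ker :=
    MulEquiv.subgroupCongr SemidirectProduct.range_inl_eq_ker_rightHom
  have iso3 : ((SemidirectProduct.rightHom : H hn →* Multiplicative ℤ).ker :
      Subgroup (H hn)) ≃* K hn := by
    have h1 : K hn = Subgroup.map ((e hn).symm : H hn ≃* DihedralArtin n).toMonoidHom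
        (SemidirectProduct.rightHom : H hn →* Multiplicative ℤ).ker := by
      rw [K_eq_comap hn]
      exact Subgroup.comap_equiv_eq_map_symm' (e hn) _
    exact ((e hn).symm.subgroupMap _).trans (MulEquiv.subgroupCongr h1.symm)
  exact (((b0.map iso1).map iso2).map iso3).isFreeGroup


/-- the length map to the free group on one generator -/
def η (n : ℕ) : DihedralArtin n →* FreeGroup Unit :=
  PresentedGroup.toGroup (f := fun _ : Bool => FreeGroup.of ()) (by
    intro r hr
    rw [Set.mem_singleton_iff] at hr
    subst hr
    have hself : ∀ (k : ℕ) (a : FreeGroup Unit), altProd a a k = a ^ k := by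
      intro k
      induction k with
      | zero => intro a; simp [altProd]
      | succ k ih => intro a; rw [altProd, ih, pow_succ']
    rw [map_mul, map_inv, map_altProd, map_altProd, FreeGroup.lift_apply_of, FreeGroup.lift_apply_of,
      hself]
    group)

def ι : Multiplicative ℤ →* FreeGroup Unit := zpowersHom _ (FreeGroup.of ())
def ρ : FreeGroup Unit →* Multiplicative ℤ := FreeGroup.lift (fun _ => Multiplicative.ofAdd 1)

theorem ρ_comp_ι : ρ.comp ι = MonoidHom.id _ := by
  apply MonoidHom.ext_mint
  show ρ (FreeGroup.of () ^ ((Multiplicative.ofAdd (1 : ℤ)).toAdd)) = _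
  simp [ρ]

theorem ι_injective : Function.Injective ι := by
  intro a b hab
  have := congrArg ρ hab
  have ha := DFunLike.congr_fun ρ_comp_ι a
  have hb := DFunLike.congr_fun ρ_comp_ι b
  simp only [MonoidHom.comp_apply, MonoidHom.id_apply] at ha hb
  rwa [ha, hb] at this

theorem η_eq {n : ℕ} (hn : 2 ≤ n) : η n = ι.comp (ξ hn) := by
  apply PresentedGroup.ext
  intro b
  have hι : ι (Multiplicative.ofAdd 1) = FreeGroup.of () := by
    show FreeGroup.of () ^ ((Multiplicative.ofAdd (1 : ℤ)).toAdd) = _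
    simp
  cases b
  · show η n (yg n) = ι (ξ hn (yg n))
    have h1 : η n (yg n) = FreeGroup.of () := PresentedGroup.toGroup.of _
    have h2 : ξ hn (yg n) = z := by
      rw [ξ, MonoidHom.comp_apply, Θ_y hn, YH, map_mul]
      simp
    rw [h1, h2, z, hι]
  · show η n (xg n) = ι (ξ hn (xg n))
    have h1 : η n (xg n) = FreeGroup.of () := PresentedGroup.toGroup.of _
    have h2 : ξ hn (xg n) = z := by
      rw [ξ, MonoidHom.comp_apply, Θ_x hn, XH]
      simp
    rw [h1, h2, z, hι]

theorem ker_η {n : ℕ} (hn : 2 ≤ n) : (η n).ker = K hn := by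
  rw [η_eq hn, K]
  ext g
  simp only [MonoidHom.mem_ker, MonoidHom.comp_apply]
  constructor
  · intro h
    have : ι (ξ hn g) = ι 1 := by rwa [map_one]
    exact ι_injective this
  · intro h
    rw [h, map_one]

theorem η_x_pow {n : ℕ} (k : ℤ) : η n (xg n ^ k) = FreeGroup.of () ^ k := by
  rw [map_zpow]
  have h : η n (xg n) = FreeGroup.of () := PresentedGroup.toGroup.of _
  rw [h]

end DAproof

/-- Every dihedral Artin group (two generators, edge label `n ≥ 2`) is normally
poly-free. -/
theorem dihedralArtin_isNormallyPolyFree (n : ℕ) (hn : 2 ≤ n) :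
    IsNormallyPolyFree (DihedralArtin n) := by
  classical
  refine ⟨2, ![⊥, DAproof.K hn, ⊤], rfl, rfl, ?_, ?_, ?_⟩
  · intro i
    fin_cases i
    · show (⊥ : Subgroup (DihedralArtin n)) ≤ DAproof.K hn
      exact bot_le
    · show DAproof.K hn ≤ ⊤
      exact le_top
  · intro i
    fin_cases i
    · show (⊥ : Subgroup (DihedralArtin n)).Normal
      infer_instance
    · show (DAproof.K hn).Normal
      rw [DAproof.K]
      infer_instance
    · show (⊤ : Subgroup (DihedralArtin n)).Normal
      infer_instance
  · intro i
    fin_cases i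
    · -- first step: the kernel itself, which is free
      refine ⟨DAproof.K hn, inferInstance, MonoidHom.id _, DAproof.K_free hn, Function.surjective_id, ?_⟩
      show MonoidHom.ker (MonoidHom.id _) = (⊥ : Subgroup (DihedralArtin n)).subgroupOf (DAproof.K hn)
      rw [MonoidHom.ker_id, Subgroup.bot_subgroupOf]
    · -- second step: quotient by the kernel is free of rank one
      refine ⟨FreeGroup Unit, inferInstance,
        (DAproof.η n).comp (Subgroup.subtype ⊤), inferInstance, ?_, ?_⟩
      · intro w
        refine ⟨⟨DAproof.xg n ^ ((DAproof.ρ w).toAdd), trivial⟩, ?_⟩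
        show DAproof.η n (DAproof.xg n ^ ((DAproof.ρ w).toAdd)) = w
        rw [DAproof.η_x_pow]
        have hι : DAproof.ι (DAproof.ρ w) = FreeGroup.of () ^ ((DAproof.ρ w).toAdd) := rfl
        rw [← hι]
        have : DAproof.ι.comp DAproof.ρ = MonoidHom.id _ := by
          apply FreeGroup.ext_hom
          intro a
          cases a
          show DAproof.ι (DAproof.ρ (FreeGroup.of ())) = FreeGroup.of ()
          rw [DAproof.ρ, FreeGroup.lift_apply_of]
          show FreeGroup.of () ^ ((Multiplicative.ofAdd (1 : ℤ)).toAdd) = _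
          simp
        have := DFunLike.congr_fun this w
        simpa using this
      · show MonoidHom.ker ((DAproof.η n).comp (Subgroup.subtype ⊤)) =
          (DAproof.K hn).subgroupOf ⊤
        rw [← MonoidHom.comap_ker, DAproof.ker_η hn, Subgroup.comap_subtype]
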